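/- Let $R = \mathbb{Z}[u,v,w,x]/(r_{15}, r_{20}, r_{24}, r_{30})$, where $r_{15} = u^{15} - 2x$, $r_{20} = 9u^{20} + 45u^{14}v + 12u^{10}w + 60u^8v^2 + 30u^4vw + 10u^2v^3 + 3w^2$, $r_{24} = 11u^{24} + 60u^{18}v + 21u^{14}w + 105u^{12}v^2 + 60u^8vw + 60u^6v^3 + 9u^4w^2 + 30u^2v^2w + 5v^4$, and $r_{30} = -9x^2 - 12u^9vx - 6u^5wx + 9u^{14}vw - 10u^{12}v^3 - 3u^{10}w^2 + 30u^8v^2w - 35u^6v^4 + 6u^4vw^2 - 10u^2v^3w - 4v^5 - 2w^3$. Then $R/(u) \cong \mathbb{Z}[z_{12},z_{20},z_{30}]/(2z_{30},\, 3z_{20}^2,\, 5z_{12}^4,\, z_{12}^5 + z_{20}^3 + z_{30}^2)$ as rings, via $v \mapsto z_{12}$, $w \mapsto z_{20}$, $x \mapsto z_{30}$. -/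

import Mathlib

open MvPolynomial

noncomputable section

/-- Variables of `ℤ[u,v,w,x]`: `u = X 0`, `v = X 1`, `w = X 2`, `x = X 3`. -/
def U : MvPolynomial (Fin 4) ℤ := X 0
def V : MvPolynomial (Fin 4) ℤ := X 1
def W : MvPolynomial (Fin 4) ℤ := X 2
def Xx : MvPolynomial (Fin 4) ℤ := X 3

def r15 : MvPolynomial (Fin 4) ℤ := U ^ 15 - 2 * Xx

def r20 : MvPolynomial (Fin 4) ℤ :=
  9 * U ^ 20 + 45 * U ^ 14 * V + 12 * U ^ 10 * W + 60 * U ^ 8 * V ^ 2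
    + 30 * U ^ 4 * V * W + 10 * U ^ 2 * V ^ 3 + 3 * W ^ 2

def r24 : MvPolynomial (Fin 4) ℤ :=
  11 * U ^ 24 + 60 * U ^ 18 * V + 21 * U ^ 14 * W + 105 * U ^ 12 * V ^ 2
    + 60 * U ^ 8 * V * W + 60 * U ^ 6 * V ^ 3 + 9 * U ^ 4 * W ^ 2
    + 30 * U ^ 2 * V ^ 2 * W + 5 * V ^ 4

def r30 : MvPolynomial (Fin 4) ℤ :=
  -9 * Xx ^ 2 - 12 * U ^ 9 * V * Xx - 6 * U ^ 5 * W * Xx + 9 * U ^ 14 * V * W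
    - 10 * U ^ 12 * V ^ 3 - 3 * U ^ 10 * W ^ 2 + 30 * U ^ 8 * V ^ 2 * W
    - 35 * U ^ 6 * V ^ 4 + 6 * U ^ 4 * V * W ^ 2 - 10 * U ^ 2 * V ^ 3 * W
    - 4 * V ^ 5 - 2 * W ^ 3

/-- `R = H^*(E₈/T¹·E₇; ℤ) = ℤ[u,v,w,x]/(r₁₅, r₂₀, r₂₄, r₃₀)`. -/
def I14 : Ideal (MvPolynomial (Fin 4) ℤ) := Ideal.span {r15, r20, r24, r30}

abbrev R14 := MvPolynomial (Fin 4) ℤ ⧸ I14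

def π14 : MvPolynomial (Fin 4) ℤ →+* R14 := Ideal.Quotient.mk I14

/-- The further quotient `R/(u)`. -/
def Iu : Ideal R14 := Ideal.span {π14 U}

abbrev R14u := R14 ⧸ Iu

def π14u : R14 →+* R14u := Ideal.Quotient.mk Iu

/-- The target ring `ℤ[z₁₂,z₂₀,z₃₀]/(2z₃₀, 3z₂₀², 5z₁₂⁴, z₁₂⁵+z₂₀³+z₃₀²)`
(`z₁₂ = X 0`, `z₂₀ = X 1`, `z₃₀ = X 2`). -/
def IZ : Ideal (MvPolynomial (Fin 3) ℤ) :=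
  Ideal.span {2 * X (2 : Fin 3), 3 * (X (1 : Fin 3)) ^ 2, 5 * (X (0 : Fin 3)) ^ 4,
    (X (0 : Fin 3)) ^ 5 + (X (1 : Fin 3)) ^ 3 + (X (2 : Fin 3)) ^ 2}

abbrev Z14 := MvPolynomial (Fin 3) ℤ ⧸ IZ

def πZ : MvPolynomial (Fin 3) ℤ →+* Z14 := Ideal.Quotient.mk IZ


noncomputable section

set_option maxHeartbeats 1000000
set_option synthInstance.maxHeartbeats 400000

def vals3 : Fin 4 → Z14 := ![0, πZ (X 0), πZ (X 1), πZ (X 2)]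

def f0 : MvPolynomial (Fin 4) ℤ →+* Z14 := (MvPolynomial.aeval vals3).toRingHom

lemma memZ1 : (2 * X (2 : Fin 3) : MvPolynomial (Fin 3) ℤ) ∈ IZ := Ideal.subset_span (by simp)
lemma memZ2 : (3 * (X (1 : Fin 3)) ^ 2 : MvPolynomial (Fin 3) ℤ) ∈ IZ := Ideal.subset_span (by simp)
lemma memZ3 : (5 * (X (0 : Fin 3)) ^ 4 : MvPolynomial (Fin 3) ℤ) ∈ IZ := Ideal.subset_span (by simp)
lemma memZ4 : ((X (0 : Fin 3)) ^ 5 + (X (1 : Fin 3)) ^ 3 + (X (2 : Fin 3)) ^ 2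
    : MvPolynomial (Fin 3) ℤ) ∈ IZ := Ideal.subset_span (by simp)

lemma πZ1 : πZ (2 * X (2 : Fin 3)) = 0 := Ideal.Quotient.eq_zero_iff_mem.2 memZ1
lemma πZ2 : πZ (3 * (X (1 : Fin 3)) ^ 2) = 0 := Ideal.Quotient.eq_zero_iff_mem.2 memZ2
lemma πZ3 : πZ (5 * (X (0 : Fin 3)) ^ 4) = 0 := Ideal.Quotient.eq_zero_iff_mem.2 memZ3

lemma f0_r15 : f0 r15 = 0 := by
  simp [f0, r15, U, Xx, vals3]; have h := πZ1; rw [map_mul] at h; convert h using 2; exact (map_ofNat πZ 2).symm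

lemma f0_r20 : f0 r20 = 0 := by
  simp [f0, r20, U, V, W, Xx, vals3]; have h := πZ2; rw [map_mul, map_pow] at h; convert h using 2; exact (map_ofNat πZ 3).symm

lemma f0_r24 : f0 r24 = 0 := by
  simp [f0, r24, U, V, W, Xx, vals3]; have h := πZ3; rw [map_mul, map_pow] at h; convert h using 2; exact (map_ofNat πZ 5).symm

lemma f0_r30 : f0 r30 = 0 := by
  have m : (-9 * (X (2:Fin 3) : MvPolynomial (Fin 3) ℤ) ^ 2 - 4 * (X 0) ^ 5
      - 2 * (X 1) ^ 3) ∈ IZ := by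
    have h : (-9 * (X (2:Fin 3) : MvPolynomial (Fin 3) ℤ) ^ 2 - 4 * (X 0) ^ 5
        - 2 * (X 1) ^ 3) =
        (-5 * X 2) * (2 * X 2) + (-X 1) * (3 * (X 1) ^ 2) + (-X 0) * (5 * (X 0) ^ 4)
          + ((X 0) ^ 5 + (X 1) ^ 3 + (X 2) ^ 2) := by ring
    rw [h]
    exact add_mem (add_mem (add_mem (Ideal.mul_mem_left _ _ memZ1)
      (Ideal.mul_mem_left _ _ memZ2)) (Ideal.mul_mem_left _ _ memZ3)) memZ4
  have key : πZ (-9 * (X (2:Fin 3)) ^ 2 - 4 * (X 0) ^ 5 - 2 * (X 1) ^ 3) = 0 :=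
    Ideal.Quotient.eq_zero_iff_mem.2 m
  simp only [map_sub, map_neg, map_mul, map_pow, map_ofNat] at key
  simp [f0, r30, U, V, W, Xx, vals3]
  linear_combination key

lemma f0_vanish : ∀ p ∈ I14, f0 p = 0 := by
  intro p hp
  rw [← RingHom.mem_ker]
  refine Ideal.span_le.2 ?_ hp
  rintro q hq
  simp only [Set.mem_insert_iff, Set.mem_singleton_iff] at hq
  rw [SetLike.mem_coe, RingHom.mem_ker]
  rcases hq with rfl | rfl | rfl | rfl
  · exact f0_r15
  · exact f0_r20
  · exact f0_r24
  · exact f0_r30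

def fR : R14 →+* Z14 := Ideal.Quotient.lift I14 f0 f0_vanish

lemma fR_U : fR (π14 U) = 0 := by
  show f0 U = 0
  simp [f0, U, vals3]

def fu : R14u →+* Z14 :=
  Ideal.Quotient.lift Iu fR (by
    intro a ha
    rw [← RingHom.mem_ker]
    refine Ideal.span_le.2 ?_ ha
    rintro q rfl
    rw [SetLike.mem_coe, RingHom.mem_ker]
    exact fR_U)

/-- The composite projection. -/
def ρ : MvPolynomial (Fin 4) ℤ →+* R14u := π14u.comp π14

lemma ρ_U : ρ U = 0 := by
  apply Ideal.Quotient.eq_zero_iff_mem.2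
  exact Ideal.subset_span rfl

lemma ρ_gen : ∀ p ∈ ({r15, r20, r24, r30} : Set (MvPolynomial (Fin 4) ℤ)), ρ p = 0 := by
  intro p hp
  have h : π14 p = 0 := Ideal.Quotient.eq_zero_iff_mem.2 (Ideal.subset_span hp)
  show π14u (π14 p) = 0
  rw [h, map_zero]

lemma ρ_r15 : ρ r15 = 0 := ρ_gen _ (by simp)
lemma ρ_r20 : ρ r20 = 0 := ρ_gen _ (by simp)
lemma ρ_r24 : ρ r24 = 0 := ρ_gen _ (by simp)
lemma ρ_r30 : ρ r30 = 0 := ρ_gen _ (by simp)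

lemma ρ_2x : ρ (2 * Xx) = 0 := by
  have h : (2 * Xx : MvPolynomial (Fin 4) ℤ) = U ^ 15 - r15 := by rw [r15]; ring
  rw [h, map_sub, map_pow, ρ_U, ρ_r15]
  simp
  exact zero_pow (M₀ := R14u) (by norm_num)

lemma ρ_3w2 : ρ (3 * W ^ 2) = 0 := by
  have h : (3 * W ^ 2 : MvPolynomial (Fin 4) ℤ) = r20 - U * (9 * U ^ 19 + 45 * U ^ 13 * V
      + 12 * U ^ 9 * W + 60 * U ^ 7 * V ^ 2 + 30 * U ^ 3 * V * W + 10 * U * V ^ 3) := by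
    rw [r20]; ring
  rw [h, map_sub, map_mul, ρ_U, ρ_r20]
  simp
  exact zero_mul (_ : R14u)

lemma ρ_5v4 : ρ (5 * V ^ 4) = 0 := by
  have h : (5 * V ^ 4 : MvPolynomial (Fin 4) ℤ) = r24 - U * (11 * U ^ 23 + 60 * U ^ 17 * V
      + 21 * U ^ 13 * W + 105 * U ^ 11 * V ^ 2 + 60 * U ^ 7 * V * W + 60 * U ^ 5 * V ^ 3
      + 9 * U ^ 3 * W ^ 2 + 30 * U * V ^ 2 * W) := by
    rw [r24]; ring
  rw [h, map_sub, map_mul, ρ_U, ρ_r24]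
  simp
  exact zero_mul (_ : R14u)

lemma ρ_sum : ρ (V ^ 5 + W ^ 3 + Xx ^ 2) = 0 := by
  have h : (V ^ 5 + W ^ 3 + Xx ^ 2 : MvPolynomial (Fin 4) ℤ) =
      r30 + 5 * Xx * (2 * Xx) + W * (3 * W ^ 2) + V * (5 * V ^ 4)
        + U * (12 * U ^ 8 * V * Xx + 6 * U ^ 4 * W * Xx - 9 * U ^ 13 * V * W
          + 10 * U ^ 11 * V ^ 3 + 3 * U ^ 9 * W ^ 2 - 30 * U ^ 7 * V ^ 2 * W
          + 35 * U ^ 5 * V ^ 4 - 6 * U ^ 3 * V * W ^ 2 + 10 * U * V ^ 3 * W) := by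
    rw [r30]; ring
  have eA : ρ (5 * Xx * (2 * Xx)) = 0 := by rw [map_mul, ρ_2x]; exact mul_zero (_ : R14u)
  have eB : ρ (W * (3 * W ^ 2)) = 0 := by rw [map_mul, ρ_3w2]; exact mul_zero (_ : R14u)
  have eC : ρ (V * (5 * V ^ 4)) = 0 := by rw [map_mul, ρ_5v4]; exact mul_zero (_ : R14u)
  have eD : ρ (U * (12 * U ^ 8 * V * Xx + 6 * U ^ 4 * W * Xx - 9 * U ^ 13 * V * W
      + 10 * U ^ 11 * V ^ 3 + 3 * U ^ 9 * W ^ 2 - 30 * U ^ 7 * V ^ 2 * W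
      + 35 * U ^ 5 * V ^ 4 - 6 * U ^ 3 * V * W ^ 2 + 10 * U * V ^ 3 * W)) = 0 := by
    rw [map_mul, ρ_U]; exact zero_mul (_ : R14u)
  rw [h, map_add, map_add, map_add, map_add, ρ_r30, eA, eB, eC, eD]
  simp

def g0 : MvPolynomial (Fin 3) ℤ →+* R14u :=
  (MvPolynomial.aeval ![ρ V, ρ W, ρ Xx]).toRingHom

lemma g0_X0 : g0 (X 0) = ρ V := by simp [g0]
lemma g0_X1 : g0 (X 1) = ρ W := by simp [g0]
lemma g0_X2 : g0 (X 2) = ρ Xx := by simp [g0]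

lemma g0_vanish : ∀ p ∈ IZ, g0 p = 0 := by
  intro p hp
  refine (RingHom.mem_ker (f := g0)).1 ?_
  refine Ideal.span_le.2 ?_ hp
  rintro q hq
  simp only [Set.mem_insert_iff, Set.mem_singleton_iff] at hq
  rw [SetLike.mem_coe, RingHom.mem_ker]
  rcases hq with rfl | rfl | rfl | rfl
  · have h := ρ_2x
    rw [map_mul, map_ofNat] at h
    rw [map_mul, map_ofNat, g0_X2]
    exact h
  · have h := ρ_3w2
    rw [map_mul, map_pow, map_ofNat] at h
    rw [map_mul, map_pow, map_ofNat, g0_X1]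
    exact h
  · have h := ρ_5v4
    rw [map_mul, map_pow, map_ofNat] at h
    rw [map_mul, map_pow, map_ofNat, g0_X0]
    exact h
  · have h := ρ_sum
    rw [map_add, map_add, map_pow, map_pow, map_pow] at h
    rw [map_add, map_add, map_pow, map_pow, map_pow, g0_X0, g0_X1, g0_X2]
    exact h

def g : Z14 →+* R14u := Ideal.Quotient.lift IZ g0 g0_vanish

lemma fu_ρ (p : MvPolynomial (Fin 4) ℤ) : fu (ρ p) = f0 p := rfl

lemma g_πZ (p : MvPolynomial (Fin 3) ℤ) : g (πZ p) = g0 p := rfl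

lemma f0_V : f0 V = πZ (X 0) := by simp [f0, V, vals3]
lemma f0_W : f0 W = πZ (X 1) := by simp [f0, W, vals3]
lemma f0_Xx : f0 Xx = πZ (X 2) := by simp [f0, Xx, vals3]
lemma f0_U : f0 U = 0 := by simp [f0, U, vals3]

lemma comp1 : fu.comp g = RingHom.id Z14 := by
  apply Ideal.Quotient.ringHom_ext
  apply MvPolynomial.ringHom_ext
  · intro a
    simp only [RingHom.comp_apply]
    rw [show (C a : MvPolynomial (Fin 3) ℤ) = (a : MvPolynomial (Fin 3) ℤ) from
      (eq_intCast (C : ℤ →+* MvPolynomial (Fin 3) ℤ) a)]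
    simp [map_intCast]
  · intro i
    fin_cases i
    · show fu (g (πZ (X 0))) = πZ (X 0)
      rw [g_πZ, g0_X0, fu_ρ, f0_V]
    · show fu (g (πZ (X 1))) = πZ (X 1)
      rw [g_πZ, g0_X1, fu_ρ, f0_W]
    · show fu (g (πZ (X 2))) = πZ (X 2)
      rw [g_πZ, g0_X2, fu_ρ, f0_Xx]

lemma comp2 : g.comp fu = RingHom.id R14u := by
  apply Ideal.Quotient.ringHom_ext
  apply Ideal.Quotient.ringHom_ext
  apply MvPolynomial.ringHom_ext
  · intro a
    simp only [RingHom.comp_apply]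
    rw [show (C a : MvPolynomial (Fin 4) ℤ) = (a : MvPolynomial (Fin 4) ℤ) from
      (eq_intCast (C : ℤ →+* MvPolynomial (Fin 4) ℤ) a)]
    simp [map_intCast]
  · intro i
    fin_cases i
    · show g (fu (ρ U)) = ρ U
      rw [fu_ρ, f0_U, map_zero, ρ_U]
    · show g (fu (ρ V)) = ρ V
      rw [fu_ρ, f0_V, g_πZ, g0_X0]
    · show g (fu (ρ W)) = ρ W
      rw [fu_ρ, f0_W, g_πZ, g0_X1]
    · show g (fu (ρ Xx)) = ρ Xx
      rw [fu_ρ, f0_Xx, g_πZ, g0_X2]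

end

/-- `R/(u) ≅ ℤ[z₁₂,z₂₀,z₃₀]/(2z₃₀, 3z₂₀², 5z₁₂⁴, z₁₂⁵+z₂₀³+z₃₀²)` via
`v ↦ z₁₂`, `w ↦ z₂₀`, `x ↦ z₃₀`. -/
theorem stmt14 :
    ∃ e : R14u ≃+* Z14,
      e (π14u (π14 V)) = πZ (X (0 : Fin 3)) ∧
      e (π14u (π14 W)) = πZ (X (1 : Fin 3)) ∧
      e (π14u (π14 Xx)) = πZ (X (2 : Fin 3)) := by
  refine ⟨RingEquiv.ofRingHom fu g comp1 comp2, ?_, ?_, ?_⟩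
  · show fu (ρ V) = _
    rw [fu_ρ, f0_V]
  · show fu (ρ W) = _
    rw [fu_ρ, f0_W]
  · show fu (ρ Xx) = _
    rw [fu_ρ, f0_Xx]

end
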